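/- Let G be a finite simple graph with n ≥ 2 vertices and minimum degree δ ≥ 1 (i.e., G has no isolated vertices). Then avd(G) ≤ 3n/4. -/

import Mathlib

open Finset

/-- `S` is a dominating set of `G`: every vertex is in `S` or adjacent to a vertex of `S`. -/
def SimpleGraph.IsDomSet {V : Type*} (G : SimpleGraph V) (S : Finset V) : Prop :=
  ∀ v : V, v ∈ S ∨ ∃ u ∈ S, G.Adj u v

/-- The family of all dominating sets of `G`. -/
noncomputable def SimpleGraph.domSets {V : Type*} [Fintype V] (G : SimpleGraph V) :
    Finset (Finset V) :=
  @Finset.filter _ (fun S => G.IsDomSet S) (Classical.decPred _) Finset.univ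

/-- The average order (cardinality) of a dominating set of `G`. -/
noncomputable def SimpleGraph.avd {V : Type*} [Fintype V] (G : SimpleGraph V) : ℝ :=
  (∑ S ∈ G.domSets, (S.card : ℝ)) / (G.domSets).card

namespace AvdProof

variable {V : Type*} [Fintype V] [DecidableEq V] (G : SimpleGraph V)

/-- `w` is dominated by the set `S`. -/
def Dm (S : Finset V) (w : V) : Prop := w ∈ S ∨ ∃ u ∈ S, G.Adj u w

lemma isDomSet_iff {S : Finset V} : G.IsDomSet S ↔ ∀ w, Dm G S w := Iff.rfl

lemma Dm.mono {S T : Finset V} (h : S ⊆ T) {w : V} (hw : Dm G S w) : Dm G T w := by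
  rcases hw with h' | ⟨u, hu, ha⟩
  · exact Or.inl (h h')
  · exact Or.inr ⟨u, h hu, ha⟩

lemma isDomSet_mono {S T : Finset V} (hS : G.IsDomSet S) (h : S ⊆ T) : G.IsDomSet T :=
  fun w => Dm.mono G h (hS w)

lemma mem_domSets {S : Finset V} : S ∈ G.domSets ↔ G.IsDomSet S := by
  classical
  simp [SimpleGraph.domSets]

/-- Removable vertices of `S`. -/
noncomputable def Ps (S : Finset V) : Finset V :=
  @Finset.filter _ (fun v => G.IsDomSet (S.erase v)) (Classical.decPred _) S

/-- Critical vertices of `S`. -/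
noncomputable def Qs (S : Finset V) : Finset V :=
  @Finset.filter _ (fun v => ¬ G.IsDomSet (S.erase v)) (Classical.decPred _) S

lemma mem_Ps {S : Finset V} {v : V} : v ∈ Ps G S ↔ v ∈ S ∧ G.IsDomSet (S.erase v) :=
  @Finset.mem_filter _ _ (Classical.decPred _) _ _

lemma mem_Qs {S : Finset V} {v : V} : v ∈ Qs G S ↔ v ∈ S ∧ ¬ G.IsDomSet (S.erase v) :=
  @Finset.mem_filter _ _ (Classical.decPred _) _ _

lemma card_Ps_add_card_Qs (S : Finset V) : (Ps G S).card + (Qs G S).card = S.card := by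
  rw [Ps, Qs]
  exact @Finset.card_filter_add_card_filter_not V S
    (fun v => G.IsDomSet (S.erase v)) (Classical.decPred _) (Classical.decPred _)

lemma sum_card_Ps :
    ∑ S ∈ G.domSets, (Ps G S).card = ∑ S ∈ G.domSets, Sᶜ.card := by
  classical
  rw [← Finset.card_sigma, ← Finset.card_sigma]
  refine Finset.card_bij' (fun p _ => ⟨p.1.erase p.2, p.2⟩)
    (fun p _ => ⟨insert p.2 p.1, p.2⟩) ?_ ?_ ?_ ?_
  · rintro ⟨S, v⟩ hp
    rw [Finset.mem_sigma] at hp ⊢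
    obtain ⟨hS, hv⟩ := hp
    rw [mem_Ps] at hv
    exact ⟨(mem_domSets G).2 hv.2, Finset.mem_compl.2 (Finset.notMem_erase v S)⟩
  · rintro ⟨T, v⟩ hp
    rw [Finset.mem_sigma] at hp ⊢
    obtain ⟨hT, hv⟩ := hp
    rw [mem_domSets] at hT
    rw [Finset.mem_compl] at hv
    dsimp only at hT hv ⊢
    refine ⟨(mem_domSets G).2 (isDomSet_mono G hT (Finset.subset_insert _ _)), ?_⟩
    rw [mem_Ps, Finset.erase_insert hv]
    exact ⟨Finset.mem_insert_self _ _, hT⟩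
  · rintro ⟨S, v⟩ hp
    rw [Finset.mem_sigma] at hp
    have hv : v ∈ S := ((mem_Ps G).1 hp.2).1
    simp [Finset.insert_erase hv]
  · rintro ⟨T, v⟩ hp
    rw [Finset.mem_sigma] at hp
    have hv : v ∉ T := Finset.mem_compl.1 hp.2
    simp [Finset.erase_insert hv]

lemma private_facts {S : Finset V} {v w : V} (hw : ¬ Dm G (S.erase v) w) (hwv : w ≠ v) :
    w ∉ S ∧ ∀ x ∈ S, G.Adj x w → x = v := by
  constructor
  · intro hwS
    exact hw (Or.inl (Finset.mem_erase.2 ⟨hwv, hwS⟩))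
  · intro x hx hadj
    by_contra hxv
    exact hw (Or.inr ⟨x, Finset.mem_erase.2 ⟨hxv, hx⟩, hadj⟩)

lemma caseB {S : Finset V} {v : V} (hS : G.IsDomSet S) (hv : v ∈ S)
    (hnd : ¬ G.IsDomSet (S.erase v))
    (hB : ¬ ∃ w, ¬ Dm G (S.erase v) w ∧ w ≠ v) {x : V} (hx : G.Adj v x) :
    x ∉ S ∧ G.IsDomSet ((insert x S).erase v) := by
  push_neg at hB
  have hy : ∃ y, ¬ Dm G (S.erase v) y := by
    by_contra hall
    push_neg at hall
    exact hnd hall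
  obtain ⟨y, hy⟩ := hy
  have hyv : y = v := hB y hy
  subst hyv
  -- hy : ¬ Dm G (S.erase y) y   (y plays the role of v)
  have hxS : x ∉ S := by
    intro hxS
    exact hy (Or.inr ⟨x, Finset.mem_erase.2 ⟨hx.ne', hxS⟩, hx.symm⟩)
  refine ⟨hxS, ?_⟩
  rw [Finset.erase_insert_of_ne hx.ne']
  intro z
  by_cases hz : z = y
  · subst hz
    exact Or.inr ⟨x, Finset.mem_insert_self _ _, hx.symm⟩
  · have hdz : Dm G (S.erase y) z := by
      by_contra h
      exact hz (hB z h)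
    exact Dm.mono G (Finset.subset_insert _ _) hdz

lemma sum_card_Qs_le (hδ : ∀ v : V, ∃ u, G.Adj v u) :
    ∑ S ∈ G.domSets, (Qs G S).card ≤ ∑ S ∈ G.domSets, ((Qs G S)ᶜ).card := by
  classical
  rw [← Finset.card_sigma, ← Finset.card_sigma]
  have hu : ∀ v, G.Adj v ((hδ v).choose) := fun v => (hδ v).choose_spec
  set u : V → V := fun v => (hδ v).choose with hu_def
  apply Finset.card_le_card_of_injOn
    (fun p => if h : ∃ w, ¬ Dm G (p.1.erase p.2) w ∧ w ≠ p.2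
              then ⟨p.1, h.choose⟩ else ⟨insert (u p.2) p.1, p.2⟩)
  · rintro ⟨S, v⟩ hp
    rw [Finset.mem_coe, Finset.mem_sigma] at hp
    obtain ⟨hSD, hvQ⟩ := hp
    rw [mem_domSets] at hSD
    rw [mem_Qs] at hvQ
    obtain ⟨hvS, hnd⟩ := hvQ
    by_cases h : ∃ w, ¬ Dm G (S.erase v) w ∧ w ≠ v
    · dsimp only
      rw [dif_pos h, Finset.mem_coe, Finset.mem_sigma]
      obtain ⟨hw, hwv⟩ := h.choose_spec
      refine ⟨(mem_domSets G).2 hSD, Finset.mem_compl.2 ?_⟩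
      intro hmem
      exact (private_facts G hw hwv).1 ((mem_Qs G).1 hmem).1
    · dsimp only
      rw [dif_neg h, Finset.mem_coe, Finset.mem_sigma]
      refine ⟨(mem_domSets G).2 (isDomSet_mono G hSD (Finset.subset_insert _ _)),
        Finset.mem_compl.2 ?_⟩
      intro hmem
      exact ((mem_Qs G).1 hmem).2 (caseB G hSD hvS hnd h (hu v)).2
  · rintro ⟨S1, v1⟩ hp1 ⟨S2, v2⟩ hp2 heq
    rw [Finset.mem_coe, Finset.mem_sigma] at hp1 hp2
    obtain ⟨hS1D, hv1Q⟩ := hp1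
    obtain ⟨hS2D, hv2Q⟩ := hp2
    rw [mem_domSets] at hS1D hS2D
    rw [mem_Qs] at hv1Q hv2Q
    obtain ⟨hv1S, hnd1⟩ := hv1Q
    obtain ⟨hv2S, hnd2⟩ := hv2Q
    dsimp only at heq
    by_cases h1 : ∃ w, ¬ Dm G (S1.erase v1) w ∧ w ≠ v1 <;>
      by_cases h2 : ∃ w, ¬ Dm G (S2.erase v2) w ∧ w ≠ v2
    · rw [dif_pos h1, dif_pos h2] at heq
      injection heq with hS hw
      subst hS
      obtain ⟨hw1, hw1v⟩ := h1.choose_spec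
      obtain ⟨hw2, hw2v⟩ := h2.choose_spec
      have pf1 := private_facts G hw1 hw1v
      have pf2 := private_facts G hw2 hw2v
      rcases hS1D h1.choose with hmem | ⟨x, hxS, hadj⟩
      · exact absurd hmem pf1.1
      · have e1 : x = v1 := pf1.2 x hxS hadj
        have e2 : x = v2 := pf2.2 x hxS (hw ▸ hadj)
        have : v1 = v2 := e1.symm.trans e2
        subst this
        rfl
    · rw [dif_pos h1, dif_neg h2] at heq
      injection heq with hS hw
      obtain ⟨hw1, hw1v⟩ := h1.choose_spec
      exact absurd (by rw [hw, hS]; exact Finset.mem_insert_of_mem hv2S)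
        (private_facts G hw1 hw1v).1
    · rw [dif_neg h1, dif_pos h2] at heq
      injection heq with hS hw
      obtain ⟨hw2, hw2v⟩ := h2.choose_spec
      exact absurd (by rw [← hw, ← hS]; exact Finset.mem_insert_of_mem hv1S)
        (private_facts G hw2 hw2v).1
    · rw [dif_neg h1, dif_neg h2] at heq
      injection heq with hS hv
      subst hv
      have hu1 : u v1 ∉ S1 := (caseB G hS1D hv1S hnd1 h1 (hu v1)).1
      have hu2 : u v1 ∉ S2 := (caseB G hS2D hv2S hnd2 h2 (hu v1)).1
      have hSS : S1 = S2 := by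
        have h' := congrArg (fun t => Finset.erase t (u v1)) hS
        simpa [Finset.erase_insert hu1, Finset.erase_insert hu2] using h'
      subst hSS
      rfl

end AvdProof

/-- For a graph `G` with `n ≥ 2` vertices and minimum degree `δ ≥ 1`
(no isolated vertices), `avd(G) ≤ 3n/4`. -/
theorem avd_le_three_quarters {V : Type*} [Fintype V] (G : SimpleGraph V)
    [DecidableRel G.Adj] (n : ℕ) (hn : n = Fintype.card V) (h2 : 2 ≤ n)
    (hδ : 1 ≤ G.minDegree) :
    G.avd ≤ 3 * (n : ℝ) / 4 := by
  classical
  have hδ' : ∀ v : V, ∃ u, G.Adj v u := by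
    intro v
    have h1 : 0 < G.degree v := lt_of_lt_of_le Nat.one_pos
      (le_trans hδ (G.minDegree_le_degree v))
    exact G.degree_pos_iff_exists_adj v |>.1 h1
  have key : 4 * ∑ S ∈ G.domSets, S.card ≤ 3 * (Fintype.card V * G.domSets.card) := by
    have e1 := AvdProof.sum_card_Ps G
    have e3 := AvdProof.sum_card_Qs_le G hδ'
    have e2 : ∑ S ∈ G.domSets, S.card
        = ∑ S ∈ G.domSets, (AvdProof.Ps G S).card + ∑ S ∈ G.domSets, (AvdProof.Qs G S).card := by
      rw [← Finset.sum_add_distrib]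
      exact Finset.sum_congr rfl fun S _ => (AvdProof.card_Ps_add_card_Qs G S).symm
    have e4 : ∑ S ∈ G.domSets, S.card + ∑ S ∈ G.domSets, Sᶜ.card
        = Fintype.card V * G.domSets.card := by
      rw [← Finset.sum_add_distrib,
        Finset.sum_congr rfl (fun (S : Finset V) _ => S.card_add_card_compl),
        Finset.sum_const, smul_eq_mul, mul_comm]
    have e5 : ∑ S ∈ G.domSets, (AvdProof.Qs G S).card
          + ∑ S ∈ G.domSets, ((AvdProof.Qs G S)ᶜ).card
        = Fintype.card V * G.domSets.card := by
      rw [← Finset.sum_add_distrib,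
        Finset.sum_congr rfl (fun (S : Finset V) _ => (AvdProof.Qs G S).card_add_card_compl),
        Finset.sum_const, smul_eq_mul, mul_comm]
    set M := Fintype.card V * G.domSets.card with hM
    omega
  have hDpos : 0 < G.domSets.card :=
    Finset.card_pos.2 ⟨Finset.univ, (AvdProof.mem_domSets G).2 (fun v => Or.inl (Finset.mem_univ v))⟩
  rw [SimpleGraph.avd]
  have hc : (0:ℝ) < (G.domSets.card : ℝ) := by exact_mod_cast hDpos
  rw [div_le_iff₀ hc]
  have h4 : (4:ℝ) * ∑ S ∈ G.domSets, (S.card : ℝ)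
      ≤ 3 * ((n : ℝ) * (G.domSets.card : ℝ)) := by
    rw [hn]
    exact_mod_cast key
  linarith
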